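/- arXiv:2209.03775 — 2 statements merged into one kernel-verified Lean document; each statement's English description precedes it below -/
import Mathlib

section
/- For all real x ∈ [0,1] and u ∈ (0,1), the series ∑_{p≥1} E_p(x)·u^p converges and equals (u²/(1−u)²)·((1−u)/(1−(1−x)u))^{1−1/u}, where E_p(x) := ∑_{n≥0} n·Q_{n,p}(x) and the power denotes the real power of the positive base (1−u)/(1−(1−x)u). -/
open MeasureTheory intervalIntegral

/-- `Q n p x` : probability that a dart game with `p` remaining players, where the
probability of beating the best throw so far is `x`, ends after exactly `n` further throws. -/
noncomputable def Q : ℕ → ℕ → ℝ → ℝ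
  | 0, p, _ => if p = 1 then 1 else 0
  | n + 1, p, x =>
      if p ≤ 1 then 0
      else (1 - x) * Q n (p - 1) x + ∫ v in (0:ℝ)..x, Q n p v

lemma Q_cont (n p : ℕ) : Continuous (fun x => Q n p x) := by
  induction n generalizing p with
  | zero => simp only [Q]; exact continuous_const
  | succ n ih =>
    simp only [Q]
    split
    · exact continuous_const
    · refine (((continuous_const.sub continuous_id).mul (ih _))).add ?_
      exact intervalIntegral.continuous_primitive
        (fun a b => ((ih p).intervalIntegrable a b : IntervalIntegrable _ volume a b)) 0

lemma Q_intInt (n p : ℕ) (a b : ℝ) : IntervalIntegrable (fun x => Q n p x) volume a b :=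
  (Q_cont n p).intervalIntegrable a b

lemma Q_nonneg (n p : ℕ) : ∀ x ∈ Set.Icc (0:ℝ) 1, 0 ≤ Q n p x := by
  induction n generalizing p with
  | zero => intro x _; simp only [Q]; split <;> norm_num
  | succ n ih =>
    intro x hx
    simp only [Q]
    split
    · exact le_refl 0
    · refine add_nonneg (mul_nonneg (by linarith [hx.2]) (ih _ x hx)) ?_
      refine intervalIntegral.integral_nonneg hx.1 ?_
      intro v hv
      exact ih p v ⟨hv.1, hv.2.trans hx.2⟩

lemma Q_p0 (n : ℕ) (x : ℝ) : Q n 0 x = 0 := by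
  cases n <;> simp [Q]

lemma Q_p1 (n : ℕ) (x : ℝ) (hn : 1 ≤ n) : Q n 1 x = 0 := by
  cases n with
  | zero => omega
  | succ n => simp [Q]

lemma Q_big (n p : ℕ) (x : ℝ) (hp : n + 2 ≤ p) : Q n p x = 0 := by
  induction n generalizing p x with
  | zero => simp only [Q]; split <;> [omega; rfl]
  | succ n ih =>
    simp only [Q]
    split
    · rfl
    · rw [ih (p-1) x (by omega), mul_zero, zero_add,
        intervalIntegral.integral_congr (g := fun _ => (0:ℝ)) (fun v _ => ih p v (by omega))]
      simp

noncomputable def Lop (u : ℝ) (f : ℝ → ℝ) : ℝ → ℝ :=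
  fun x => (1 - x) * u * f x + ∫ v in (0:ℝ)..x, f v

noncomputable def Gg (u : ℝ) (n : ℕ) : ℝ → ℝ :=
  fun x => ∑ p ∈ Finset.range (n+2), Q n p x * u ^ p

lemma Gg_cont (u : ℝ) (n : ℕ) : Continuous (Gg u n) := by
  unfold Gg
  exact continuous_finset_sum _ (fun p _ => (Q_cont n p).mul continuous_const)

lemma Gg_nonneg (u : ℝ) (hu : 0 ≤ u) (n : ℕ) : ∀ x ∈ Set.Icc (0:ℝ) 1, 0 ≤ Gg u n x := by
  intro x hx
  exact Finset.sum_nonneg fun p _ => mul_nonneg (Q_nonneg n p x hx) (pow_nonneg hu p)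

lemma Gg_one (u : ℝ) (x : ℝ) : Gg u 1 x = (1 - x) * u ^ 2 := by
  have h02 : ∀ v:ℝ, Q 0 2 v = 0 := fun v => by simp [Q]
  have h01 : Q 0 1 x = 1 := by simp [Q]
  have hQ12 : Q 1 2 x = 1 - x := by
    simp [Q]
  unfold Gg
  rw [show (1+2) = 3 from rfl, Finset.sum_range_succ, Finset.sum_range_succ,
    Finset.sum_range_one, Q_p0, Q_p1 _ _ le_rfl, hQ12]
  ring

lemma Lop_cont (u : ℝ) {f : ℝ → ℝ} (hf : Continuous f) : Continuous (Lop u f) := by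
  unfold Lop
  exact (((continuous_const.sub continuous_id).mul continuous_const).mul hf).add
    (intervalIntegral.continuous_primitive
      (fun a b => (hf.intervalIntegrable a b : IntervalIntegrable _ volume a b)) 0)

lemma Gg_succ (u : ℝ) (n : ℕ) (hn : 1 ≤ n) (x : ℝ) :
    Gg u (n+1) x = Lop u (Gg u n) x := by
  have hA : ∑ p ∈ Finset.range (n+2), Q n p x * u^p
      = ∑ p ∈ Finset.range (n+1), Q n (p+1) x * u^(p+1) := by
    rw [Finset.sum_range_succ' (fun p => Q n p x * u^p) (n+1), Q_p0]; simp
  have hB : ∀ v : ℝ, ∑ p ∈ Finset.range (n+1), Q n (p+2) v * u^(p+2)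
      = ∑ p ∈ Finset.range (n+2), Q n p v * u^p := by
    intro v
    rw [Finset.sum_range_succ (fun p => Q n (p+2) v * u^(p+2)) n, Q_big n (n+2) v le_rfl,
      Finset.sum_range_succ' (fun p => Q n p v * u^p) (n+1), Q_p0,
      Finset.sum_range_succ' (fun p => Q n (p+1) v * u^(p+1)) n, Q_p1 _ _ hn]
    norm_num
  show ∑ p ∈ Finset.range (n+1+2), Q (n+1) p x * u ^ p
      = (1-x)*u*(∑ p ∈ Finset.range (n+2), Q n p x * u^p)
        + ∫ v in (0:ℝ)..x, ∑ p ∈ Finset.range (n+2), Q n p v * u^p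
  have h0 : Q (n+1) 0 x * u ^ 0 = 0 := by rw [Q_p0]; ring
  have h1 : Q (n+1) 1 x * u ^ 1 = 0 := by rw [Q_p1 _ _ (by omega)]; ring
  rw [Finset.sum_range_succ' _ (n+2), Finset.sum_range_succ' _ (n+1), h0, h1, add_zero, add_zero]
  have key : ∀ p ∈ Finset.range (n+1), Q (n+1) (p+1+1) x * u ^ (p+1+1)
      = (1-x)*u * (Q n (p+1) x * u^(p+1)) + (∫ v in (0:ℝ)..x, Q n (p+2) v * u^(p+2)) := by
    intro p _
    have hrec : Q (n+1) (p+2) x = (1-x) * Q n (p+1) x + ∫ v in (0:ℝ)..x, Q n (p+2) v := by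
      simp only [Q]
      rw [if_neg (by omega)]
      norm_num
    rw [show p+1+1 = p+2 from rfl, hrec, intervalIntegral.integral_mul_const]
    ring
  rw [Finset.sum_congr rfl key, Finset.sum_add_distrib, ← Finset.mul_sum, hA]
  congr 1
  rw [← intervalIntegral.integral_finset_sum
      (fun p _ => (Q_intInt n (p+2) 0 x).mul_const _)]
  exact intervalIntegral.integral_congr fun v _ => hB v

noncomputable def psiF (u : ℝ) : ℝ → ℝ := fun _ => u^2 / (1-u)

noncomputable def chiF (u : ℝ) : ℝ → ℝ :=
  fun x => u^2/(1-u)^2 * ((1-u)/(1-u+u*|x|)) ^ ((1 - 1/u : ℝ))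

def g1F (u : ℝ) : ℝ → ℝ := fun x => (1-x)*u^2

lemma g1F_cont (u : ℝ) : Continuous (g1F u) := by
  unfold g1F; fun_prop

lemma chiF_cont (u : ℝ) (hu0 : 0 < u) (hu1 : u < 1) : Continuous (chiF u) := by
  unfold chiF
  have hden : ∀ x : ℝ, 1 - u + u * |x| ≠ 0 := by
    intro x
    have : 0 ≤ u * |x| := mul_nonneg hu0.le (abs_nonneg x)
    nlinarith
  refine continuous_const.mul ?_
  refine Continuous.rpow_const ?_ ?_
  · exact continuous_const.div (by fun_prop) hden
  · intro x
    left
    refine div_ne_zero (by nlinarith) (hden x)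

lemma Lop_psi (u : ℝ) (hu1 : u ≠ 1) (x : ℝ) :
    Lop u (psiF u) x = psiF u x - g1F u x := by
  have h : (1:ℝ) - u ≠ 0 := sub_ne_zero.mpr (Ne.symm hu1)
  unfold Lop psiF g1F
  rw [intervalIntegral.integral_const, smul_eq_mul]
  field_simp
  ring

lemma Lop_chi (u : ℝ) (hu0 : 0 < u) (hu1 : u < 1) (x : ℝ) (hx : 0 ≤ x) :
    Lop u (chiF u) x = chiF u x - psiF u x := by
  have h1u : (0:ℝ) < 1 - u := by linarith
  have hA : ∀ v : ℝ, 0 ≤ v → (0:ℝ) < 1 - u + u * v := by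
    intro v hv; nlinarith
  have hBx : (0:ℝ) < 1 - u + u * x := hA x hx
  -- the integral
  have hint : (∫ v in (0:ℝ)..x, chiF u v)
      = u^2/(1-u)^2 * (1-u) ^ ((1 - 1/u : ℝ)) *
        ((1-u+u*x) ^ ((1/u : ℝ)) - (1-u) ^ ((1/u : ℝ))) := by
    have hcongr : ∀ v ∈ Set.uIcc (0:ℝ) x, chiF u v
        = u^2/(1-u)^2 * (1-u) ^ ((1 - 1/u : ℝ)) * (1-u+u*v) ^ ((1/u - 1 : ℝ)) := by
      intro v hv
      rw [Set.uIcc_of_le hx] at hv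
      have hv0 : 0 ≤ v := hv.1
      unfold chiF
      rw [abs_of_nonneg hv0, Real.div_rpow h1u.le (hA v hv0).le,
        show (1/u - 1 : ℝ) = -(1 - 1/u) by ring, Real.rpow_neg (hA v hv0).le]
      ring
    rw [intervalIntegral.integral_congr hcongr, intervalIntegral.integral_const_mul]
    congr 1
    have hderiv : ∀ v ∈ Set.uIcc (0:ℝ) x,
        HasDerivAt (fun w => (1-u+u*w) ^ ((1/u : ℝ))) ((1-u+u*v) ^ ((1/u - 1 : ℝ))) v := by
      intro v hv
      rw [Set.uIcc_of_le hx] at hv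
      have hv0 : (0:ℝ) < 1 - u + u * v := hA v hv.1
      have h1 : HasDerivAt (fun w : ℝ => 1 - u + u * w) u v := by
        simpa using ((hasDerivAt_id v).const_mul u).const_add (1-u)
      have h2 := (Real.hasDerivAt_rpow_const (x := 1-u+u*v) (p := (1/u : ℝ))
        (Or.inl hv0.ne')).comp v h1
      refine h2.congr_deriv ?_
      rw [Real.rpow_sub hv0, Real.rpow_one]
      field_simp
    have hcont : ContinuousOn (fun v => (1-u+u*v) ^ ((1/u - 1 : ℝ))) (Set.uIcc (0:ℝ) x) := by
      apply ContinuousOn.rpow_const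
      · fun_prop
      · intro v hv
        rw [Set.uIcc_of_le hx] at hv
        exact Or.inl (hA v hv.1).ne'
    rw [intervalIntegral.integral_eq_sub_of_hasDerivAt hderiv hcont.intervalIntegrable]
    norm_num
  unfold Lop
  rw [hint]
  unfold chiF psiF
  rw [abs_of_nonneg hx, Real.div_rpow h1u.le hBx.le]
  have hPpos : (0:ℝ) < (1-u+u*x) ^ ((1 - 1/u : ℝ)) := Real.rpow_pos_of_pos hBx _
  have hRpos : (0:ℝ) < ((1-u):ℝ) ^ ((1 - 1/u : ℝ)) := Real.rpow_pos_of_pos h1u _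
  have e1 : (1-u+u*x) ^ ((1/u : ℝ)) = (1-u+u*x) / (1-u+u*x) ^ ((1 - 1/u : ℝ)) := by
    rw [eq_div_iff hPpos.ne', ← Real.rpow_add hBx,
      show ((1/u) + (1 - 1/u) : ℝ) = 1 by ring, Real.rpow_one]
  have e2 : ((1-u):ℝ) ^ ((1/u : ℝ)) = (1-u) / ((1-u):ℝ) ^ ((1 - 1/u : ℝ)) := by
    rw [eq_div_iff hRpos.ne', ← Real.rpow_add h1u,
      show ((1/u) + (1 - 1/u) : ℝ) = 1 by ring, Real.rpow_one]
  rw [e1, e2]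
  field_simp
  ring

lemma Lop_iter_cont (u : ℝ) {f : ℝ → ℝ} (hf : Continuous f) (M : ℕ) :
    Continuous ((Lop u)^[M] f) := by
  induction M with
  | zero => exact hf
  | succ M ih => rw [Function.iterate_succ_apply']; exact Lop_cont u ih

lemma Lop_sub (u : ℝ) {f g : ℝ → ℝ} (hf : Continuous f) (hg : Continuous g) :
    Lop u (fun y => f y - g y) = fun x => Lop u f x - Lop u g x := by
  funext x
  unfold Lop
  rw [intervalIntegral.integral_sub (hf.intervalIntegrable 0 x) (hg.intervalIntegrable 0 x)]
  ring

lemma Lop_iter_sub (u : ℝ) {f g : ℝ → ℝ} (hf : Continuous f) (hg : Continuous g) (M : ℕ) :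
    (Lop u)^[M] (fun y => f y - g y) = fun x => (Lop u)^[M] f x - (Lop u)^[M] g x := by
  induction M with
  | zero => rfl
  | succ M ih =>
    rw [Function.iterate_succ_apply', ih, Lop_sub u (Lop_iter_cont u hf M) (Lop_iter_cont u hg M),
      Function.iterate_succ_apply' (Lop u) M f, Function.iterate_succ_apply' (Lop u) M g]

lemma Lop_congr (u : ℝ) {f g : ℝ → ℝ} (h : Set.EqOn f g (Set.Icc 0 1)) :
    Set.EqOn (Lop u f) (Lop u g) (Set.Icc 0 1) := by
  intro x hx
  unfold Lop
  rw [h hx, intervalIntegral.integral_congr (g := g)]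
  intro v hv
  rw [Set.uIcc_of_le hx.1] at hv
  exact h ⟨hv.1, hv.2.trans hx.2⟩

lemma Lop_iter_congr (u : ℝ) {f g : ℝ → ℝ} (h : Set.EqOn f g (Set.Icc 0 1)) (M : ℕ) :
    Set.EqOn ((Lop u)^[M] f) ((Lop u)^[M] g) (Set.Icc 0 1) := by
  induction M with
  | zero => exact h
  | succ M ih =>
    rw [Function.iterate_succ_apply', Function.iterate_succ_apply']
    exact Lop_congr u ih

noncomputable def binPoly (u : ℝ) (M : ℕ) (x : ℝ) : ℝ :=
  ∑ k ∈ Finset.range (M+1), (M.choose k : ℝ) * u^(M-k) * x^k / (k.factorial : ℝ)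

lemma binPoly_cont (u : ℝ) (M : ℕ) : Continuous (binPoly u M) := by
  unfold binPoly; fun_prop

lemma binPoly_step (u : ℝ) (M : ℕ) (x : ℝ) :
    u * binPoly u M x
      + ∑ k ∈ Finset.range (M+1), (M.choose k : ℝ) * u^(M-k) * x^(k+1) / ((k+1).factorial : ℝ)
    = binPoly u (M+1) x := by
  have hsplit : ∀ k ∈ Finset.range (M+1),
      (((M+1).choose (k+1) : ℝ)) * u^(M+1-(k+1)) * x^(k+1) / ((k+1).factorial : ℝ)
      = (M.choose k : ℝ) * u^(M-k) * x^(k+1) / ((k+1).factorial : ℝ)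
        + (M.choose (k+1) : ℝ) * u^(M-k) * x^(k+1) / ((k+1).factorial : ℝ) := by
    intro k _
    rw [Nat.choose_succ_succ]
    push_cast
    ring
  have h2 : ∑ k ∈ Finset.range (M+1), (M.choose (k+1) : ℝ) * u^(M-k) * x^(k+1) / ((k+1).factorial : ℝ)
      = ∑ k ∈ Finset.range M, (M.choose (k+1) : ℝ) * u^(M-k) * x^(k+1) / ((k+1).factorial : ℝ) := by
    rw [Finset.sum_range_succ, Nat.choose_succ_self]
    norm_num
  have h3 : u * binPoly u M x = ∑ k ∈ Finset.range M,
      (M.choose (k+1) : ℝ) * u^(M-k) * x^(k+1) / ((k+1).factorial : ℝ) + u^(M+1) := by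
    unfold binPoly
    rw [Finset.mul_sum, Finset.sum_range_succ' (fun k => u * ((M.choose k : ℝ) * u^(M-k) * x^k / (k.factorial : ℝ))) M]
    congr 1
    · refine Finset.sum_congr rfl fun k hk => ?_
      rw [Finset.mem_range] at hk
      have he : M - k = (M - (k+1)) + 1 := by omega
      rw [he, pow_succ]
      push_cast
      ring
    · simp [pow_succ]
      ring
  have hR : binPoly u (M+1) x
      = ∑ k ∈ Finset.range (M+1), (M.choose k:ℝ)*u^(M-k)*x^(k+1)/((k+1).factorial:ℝ)
        + (∑ k ∈ Finset.range M, (M.choose (k+1):ℝ)*u^(M-k)*x^(k+1)/((k+1).factorial:ℝ) + u^(M+1)) := by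
    unfold binPoly
    rw [Finset.sum_range_succ' (fun k => ((M+1).choose k : ℝ) * u^(M+1-k) * x^k / (k.factorial : ℝ)) (M+1),
      Finset.sum_congr rfl hsplit, Finset.sum_add_distrib, h2]
    simp
    ring
  rw [hR, h3]
  ring

lemma Lop_iter_bound (u : ℝ) (hu0 : 0 ≤ u) {f : ℝ → ℝ} {c : ℝ}
    (hf : Continuous f) (hfb : ∀ y ∈ Set.Icc (0:ℝ) 1, 0 ≤ f y ∧ f y ≤ c) (M : ℕ) :
    ∀ x ∈ Set.Icc (0:ℝ) 1, 0 ≤ (Lop u)^[M] f x ∧ (Lop u)^[M] f x ≤ c * binPoly u M x := by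
  induction M with
  | zero =>
    intro x hx
    refine ⟨(hfb x hx).1, ?_⟩
    have : binPoly u 0 x = 1 := by unfold binPoly; simp
    rw [this, mul_one]; exact (hfb x hx).2
  | succ M ih =>
    intro x hx
    obtain ⟨hx0, hx1⟩ := hx
    rw [Function.iterate_succ_apply']
    have hcont : Continuous ((Lop u)^[M] f) := Lop_iter_cont u hf M
    constructor
    · refine add_nonneg (mul_nonneg (mul_nonneg (by linarith) hu0)
        (ih x ⟨hx0, hx1⟩).1) ?_
      exact intervalIntegral.integral_nonneg hx0
        (fun v hv => (ih v ⟨hv.1, hv.2.trans hx1⟩).1)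
    · show (1-x)*u*((Lop u)^[M] f x) + (∫ v in (0:ℝ)..x, (Lop u)^[M] f v) ≤ _
      have t1 : (1-x)*u*((Lop u)^[M] f x) ≤ u * (c * binPoly u M x) := by
        have h1 : (1-x)*u ≤ 1*u := by
          apply mul_le_mul_of_nonneg_right _ hu0; linarith
        have hnn := (ih x ⟨hx0, hx1⟩).1
        calc (1-x)*u*((Lop u)^[M] f x) ≤ 1*u*((Lop u)^[M] f x) :=
              mul_le_mul_of_nonneg_right h1 hnn
          _ = u * ((Lop u)^[M] f x) := by ring
          _ ≤ u * (c * binPoly u M x) :=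
              mul_le_mul_of_nonneg_left (ih x ⟨hx0, hx1⟩).2 hu0
      have t2 : (∫ v in (0:ℝ)..x, (Lop u)^[M] f v)
          ≤ ∫ v in (0:ℝ)..x, c * binPoly u M v := by
        refine intervalIntegral.integral_mono_on hx0 (hcont.intervalIntegrable 0 x)
          ((continuous_const.mul (binPoly_cont u M)).intervalIntegrable 0 x) ?_
        intro v hv
        exact (ih v ⟨hv.1, hv.2.trans hx1⟩).2
      have t3 : (∫ v in (0:ℝ)..x, c * binPoly u M v)
          = c * ∑ k ∈ Finset.range (M+1), (M.choose k : ℝ) * u^(M-k) * x^(k+1) / ((k+1).factorial : ℝ) := by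
        rw [intervalIntegral.integral_const_mul]
        congr 1
        unfold binPoly
        rw [intervalIntegral.integral_finset_sum (fun k _ =>
          (by fun_prop : Continuous (fun v : ℝ => (M.choose k : ℝ) * u^(M-k) * v^k / (k.factorial : ℝ))).intervalIntegrable 0 x)]
        refine Finset.sum_congr rfl fun k hk => ?_
        rw [show (fun v => (M.choose k : ℝ) * u^(M-k) * v^k / (k.factorial : ℝ))
            = fun v => ((M.choose k : ℝ) * u^(M-k) / (k.factorial : ℝ)) * v^k from funext fun v => by ring]
        rw [intervalIntegral.integral_const_mul, integral_pow, zero_pow k.succ_ne_zero,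
          sub_zero, Nat.factorial_succ]
        have hkf : ((k.factorial : ℝ)) ≠ 0 := Nat.cast_ne_zero.mpr k.factorial_ne_zero
        have hk1 : ((k:ℝ) + 1) ≠ 0 := Nat.cast_add_one_ne_zero k
        push_cast
        field_simp
      calc (1-x)*u*((Lop u)^[M] f x) + (∫ v in (0:ℝ)..x, (Lop u)^[M] f v)
          ≤ u * (c * binPoly u M x) + c * ∑ k ∈ Finset.range (M+1),
              (M.choose k : ℝ) * u^(M-k) * x^(k+1) / ((k+1).factorial : ℝ) := by
            refine add_le_add t1 (t2.trans (le_of_eq t3))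
        _ = c * binPoly u (M+1) x := by rw [← binPoly_step]; ring

lemma binPoly_le (u : ℝ) (hu0 : 0 < u) (hu1 : u < 1) (M : ℕ) (x : ℝ) (hx : x ∈ Set.Icc (0:ℝ) 1) :
    binPoly u M x ≤ Real.exp (2/(1-u)) * ((1+u)/2)^M := by
  have h1u : (0:ℝ) < 1 - u := by linarith
  have key : ∀ k : ℕ, (1:ℝ) / (k.factorial : ℝ) ≤ Real.exp (2/(1-u)) * ((1-u)/2)^k := by
    intro k
    have h := Real.pow_div_factorial_le_exp (x := 2/(1-u)) (by positivity) k
    have h2 : (0:ℝ) < ((1-u)/2)^k := by positivity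
    have h3 : (2/(1-u))^k * ((1-u)/2)^k = 1 := by
      rw [← mul_pow, show (2/(1-u))*((1-u)/2) = 1 by field_simp]; exact one_pow k
    have hk : (0:ℝ) < (k.factorial:ℝ) := by positivity
    calc (1:ℝ)/(k.factorial:ℝ) = (2/(1-u))^k * ((1-u)/2)^k / (k.factorial:ℝ) := by rw [h3]
      _ = ((2/(1-u))^k / (k.factorial:ℝ)) * ((1-u)/2)^k := by ring
      _ ≤ Real.exp (2/(1-u)) * ((1-u)/2)^k := mul_le_mul_of_nonneg_right h h2.le
  calc binPoly u M x ≤ ∑ k ∈ Finset.range (M+1),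
        (M.choose k : ℝ) * u^(M-k) * (Real.exp (2/(1-u)) * ((1-u)/2)^k) := by
        unfold binPoly
        refine Finset.sum_le_sum fun k _ => ?_
        rw [div_eq_mul_inv, ← one_div]
        have hxk : x^k ≤ 1 := pow_le_one₀ hx.1 hx.2
        have hb : (0:ℝ) ≤ (M.choose k : ℝ) * u^(M-k) := by positivity
        calc (M.choose k : ℝ) * u^(M-k) * x^k * (1/(k.factorial:ℝ))
            ≤ (M.choose k : ℝ) * u^(M-k) * 1 * (1/(k.factorial:ℝ)) := by
              apply mul_le_mul_of_nonneg_right _ (by positivity)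
              exact mul_le_mul_of_nonneg_left hxk hb
          _ = (M.choose k : ℝ) * u^(M-k) * (1/(k.factorial:ℝ)) := by ring
          _ ≤ (M.choose k : ℝ) * u^(M-k) * (Real.exp (2/(1-u)) * ((1-u)/2)^k) :=
              mul_le_mul_of_nonneg_left (key k) hb
    _ = Real.exp (2/(1-u)) * ((1+u)/2)^M := by
        rw [show ((1+u)/2 : ℝ) = (1-u)/2 + u by ring, add_pow]
        rw [Finset.mul_sum]
        refine Finset.sum_congr rfl fun k hk => ?_
        ring

lemma Gg_iter (u : ℝ) (n : ℕ) : Gg u (n+1) = (Lop u)^[n] (g1F u) := by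
  induction n with
  | zero => funext x; rw [Function.iterate_zero_apply]; exact (Gg_one u x).trans rfl
  | succ n ih =>
    funext x
    rw [Gg_succ u (n+1) (by omega) x, ih, Function.iterate_succ_apply']

lemma psiF_bound (u : ℝ) (hu0 : 0 < u) (hu1 : u < 1) :
    ∀ y ∈ Set.Icc (0:ℝ) 1, 0 ≤ psiF u y ∧ psiF u y ≤ u^2/(1-u) := by
  intro y _
  have h : (0:ℝ) < 1 - u := by linarith
  exact ⟨div_nonneg (sq_nonneg u) h.le, le_refl _⟩

lemma chiF_bound (u : ℝ) (hu0 : 0 < u) (hu1 : u < 1) :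
    ∀ y ∈ Set.Icc (0:ℝ) 1, 0 ≤ chiF u y ∧
      chiF u y ≤ u^2/(1-u)^2 * ((1-u) : ℝ) ^ ((1 - 1/u : ℝ)) := by
  intro y hy
  have h1u : (0:ℝ) < 1 - u := by linarith
  have hden : (0:ℝ) < 1 - u + u * |y| := by positivity
  have hbase : (0:ℝ) < (1-u)/(1-u+u*|y|) := by positivity
  have hc : (0:ℝ) ≤ u^2/(1-u)^2 := by positivity
  constructor
  · exact mul_nonneg hc (Real.rpow_pos_of_pos hbase _).le
  · refine mul_le_mul_of_nonneg_left ?_ hc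
    rw [Real.rpow_def_of_pos hbase, Real.rpow_def_of_pos h1u]
    apply Real.exp_le_exp.mpr
    have hβ : (1 - 1/u : ℝ) ≤ 0 := by
      have : (1:ℝ) ≤ 1/u := by rw [le_div_iff₀ hu0]; linarith
      linarith
    have hb1 : 1 - u ≤ (1-u)/(1-u+u*|y|) := by
      rw [le_div_iff₀ hden]
      have h2 : |y| ≤ 1 := by rw [abs_le]; constructor <;> [linarith [hy.1]; exact hy.2]
      nlinarith [mul_nonneg h1u.le (mul_nonneg hu0.le (sub_nonneg.mpr h2))]
    have hlog := Real.log_le_log h1u hb1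
    exact mul_le_mul_of_nonpos_right hlog hβ

lemma partial_sum_id (u : ℝ) (hu0 : 0 < u) (hu1 : u < 1) (M : ℕ) :
    ∀ x ∈ Set.Icc (0:ℝ) 1,
      ∑ n ∈ Finset.range (M+1), (n:ℝ) * Gg u n x
      = chiF u x - ((M:ℝ)+1) * (Lop u)^[M] (psiF u) x - (Lop u)^[M+1] (chiF u) x := by
  induction M with
  | zero =>
    intro x hx
    rw [Finset.sum_range_succ, Finset.sum_range_zero]
    simp only [Nat.cast_zero, zero_mul, zero_add, Function.iterate_zero_apply,
      Function.iterate_one]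
    rw [Lop_chi u hu0 hu1 x hx.1]
    ring
  | succ M ih =>
    intro x hx
    rw [Finset.sum_range_succ, ih x hx]
    have hψc : Continuous (psiF u) := continuous_const
    have hχc : Continuous (chiF u) := chiF_cont u hu0 hu1
    have hg1c := g1F_cont u
    have eψ : ∀ y : ℝ, (Lop u)^[M+1] (psiF u) y
        = (Lop u)^[M] (psiF u) y - (Lop u)^[M] (g1F u) y := by
      intro y
      rw [Function.iterate_succ_apply,
        show Lop u (psiF u) = (fun z => psiF u z - g1F u z) from
          funext fun z => Lop_psi u (ne_of_lt hu1) z,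
        Lop_iter_sub u hψc hg1c M]
    have eχ : (Lop u)^[M+1+1] (chiF u) x
        = (Lop u)^[M+1] (chiF u) x - (Lop u)^[M+1] (psiF u) x := by
      have h1 : Set.EqOn (Lop u (chiF u)) (fun z => chiF u z - psiF u z) (Set.Icc 0 1) :=
        fun z hz => Lop_chi u hu0 hu1 z hz.1
      have h2 := Lop_iter_congr u h1 (M+1) hx
      rw [Function.iterate_succ_apply, h2, Lop_iter_sub u hχc hψc (M+1)]
    have eG : Gg u (M+1) x = (Lop u)^[M] (g1F u) x := by rw [Gg_iter u M]
    rw [eG, eχ, eψ x]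
    push_cast
    ring

lemma Gg_hasSum (u : ℝ) (hu0 : 0 < u) (hu1 : u < 1) (x : ℝ) (hx : x ∈ Set.Icc (0:ℝ) 1) :
    HasSum (fun n : ℕ => (n:ℝ) * Gg u n x) (chiF u x) := by
  have hnn : ∀ n : ℕ, 0 ≤ (n:ℝ) * Gg u n x := fun n =>
    mul_nonneg (Nat.cast_nonneg n) (Gg_nonneg u hu0.le n x hx)
  rw [hasSum_iff_tendsto_nat_of_nonneg hnn]
  rw [← Filter.tendsto_add_atTop_iff_nat 1]
  have key : (fun M : ℕ => ∑ n ∈ Finset.range (M+1), (n:ℝ) * Gg u n x)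
      = fun M : ℕ => chiF u x - ((M:ℝ)+1) * (Lop u)^[M] (psiF u) x
          - (Lop u)^[M+1] (chiF u) x :=
    funext fun M => partial_sum_id u hu0 hu1 M x hx
  rw [key]
  set E := Real.exp (2/(1-u)) with hE
  set r := ((1+u)/2 : ℝ) with hr
  have hE0 : 0 < E := Real.exp_pos _
  have hr0 : 0 ≤ r := by rw [hr]; linarith
  have hr1 : r < 1 := by rw [hr]; linarith
  have hrlt : ‖r‖ < 1 := by rw [Real.norm_eq_abs, abs_of_nonneg hr0]; exact hr1
  have hcψ : (0:ℝ) ≤ u^2/(1-u) := by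
    have : (0:ℝ) < 1 - u := by linarith
    positivity
  have hcχ : (0:ℝ) ≤ u^2/(1-u)^2 * ((1-u):ℝ) ^ ((1 - 1/u : ℝ)) := by
    have h1u : (0:ℝ) < 1 - u := by linarith
    have := Real.rpow_pos_of_pos h1u ((1 - 1/u : ℝ))
    positivity
  have hψb := psiF_bound u hu0 hu1
  have hχb := chiF_bound u hu0 hu1
  have boundψ : ∀ M : ℕ, 0 ≤ (Lop u)^[M] (psiF u) x ∧
      (Lop u)^[M] (psiF u) x ≤ (u^2/(1-u)) * (E * r^M) := by
    intro M
    obtain ⟨h0, h1⟩ := Lop_iter_bound u hu0.le continuous_const hψb M x hx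
    exact ⟨h0, h1.trans (mul_le_mul_of_nonneg_left (binPoly_le u hu0 hu1 M x hx) hcψ)⟩
  have boundχ : ∀ M : ℕ, 0 ≤ (Lop u)^[M] (chiF u) x ∧
      (Lop u)^[M] (chiF u) x ≤ (u^2/(1-u)^2 * ((1-u):ℝ) ^ ((1 - 1/u : ℝ))) * (E * r^M) := by
    intro M
    obtain ⟨h0, h1⟩ := Lop_iter_bound u hu0.le (chiF_cont u hu0 hu1) hχb M x hx
    exact ⟨h0, h1.trans (mul_le_mul_of_nonneg_left (binPoly_le u hu0 hu1 M x hx) hcχ)⟩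
  have hsum : Summable (fun M : ℕ => ((M:ℝ)+1) * r^M) := by
    have h1 : Summable (fun M : ℕ => (M:ℝ)^1 * r^M) :=
      summable_pow_mul_geometric_of_norm_lt_one 1 hrlt
    have h2 : Summable (fun M : ℕ => r^M) := summable_geometric_of_lt_one hr0 hr1
    have := h1.add h2
    refine this.congr fun M => ?_
    ring
  have hMr : Filter.Tendsto (fun M : ℕ => ((M:ℝ)+1) * r^M) Filter.atTop (nhds 0) :=
    hsum.tendsto_atTop_zero
  have T1 : Filter.Tendsto (fun M : ℕ => ((M:ℝ)+1) * (Lop u)^[M] (psiF u) x)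
      Filter.atTop (nhds 0) := by
    refine squeeze_zero (g := fun M : ℕ => (u^2/(1-u)) * E * (((M:ℝ)+1) * r^M))
      (fun M : ℕ => mul_nonneg (by positivity) (boundψ M).1) ?_ ?_
    · intro M
      calc ((M:ℝ)+1) * (Lop u)^[M] (psiF u) x
          ≤ ((M:ℝ)+1) * ((u^2/(1-u)) * (E * r^M)) :=
            mul_le_mul_of_nonneg_left (boundψ M).2 (by positivity)
        _ = (u^2/(1-u)) * E * (((M:ℝ)+1) * r^M) := by ring
    · have := hMr.const_mul ((u^2/(1-u)) * E)
      simpa using this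
  have T2 : Filter.Tendsto (fun M : ℕ => (Lop u)^[M+1] (chiF u) x)
      Filter.atTop (nhds 0) := by
    refine squeeze_zero (g := fun M : ℕ => (u^2/(1-u)^2 * ((1-u):ℝ) ^ ((1 - 1/u : ℝ))) * E * r * r^M)
      (fun M : ℕ => (boundχ (M+1)).1) ?_ ?_
    · intro M
      calc (Lop u)^[M+1] (chiF u) x
          ≤ (u^2/(1-u)^2 * ((1-u):ℝ) ^ ((1 - 1/u : ℝ))) * (E * r^(M+1)) := (boundχ (M+1)).2
        _ = (u^2/(1-u)^2 * ((1-u):ℝ) ^ ((1 - 1/u : ℝ))) * E * r * r^M := by ring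
    · have h2 : Filter.Tendsto (fun M : ℕ => r^M) Filter.atTop (nhds 0) :=
        tendsto_pow_atTop_nhds_zero_of_lt_one hr0 hr1
      have := h2.const_mul ((u^2/(1-u)^2 * ((1-u):ℝ) ^ ((1 - 1/u : ℝ))) * E * r)
      simpa using this
  have := (tendsto_const_nhds (x := chiF u x) (f := Filter.atTop (α := ℕ))).sub T1 |>.sub T2
  simpa using this

/-- For `x ∈ [0,1]` and `u ∈ (0,1)`, with `E_p(x) := ∑_{n≥0} n·Q_{n,p}(x)` the expected
number of remaining throws, the series `∑_{p≥1} E_p(x) u^p` converges and equals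
`(u²/(1−u)²)·((1−u)/(1−(1−x)u))^{1−1/u}`, where the power is the real power of the
positive base `(1−u)/(1−(1−x)u)`. -/
theorem expectedRemaining_genFun (x u : ℝ) (hx : x ∈ Set.Icc (0:ℝ) 1)
    (hu : u ∈ Set.Ioo (0:ℝ) 1) :
    (∀ p : ℕ, 1 ≤ p → Summable fun n : ℕ => (n : ℝ) * Q n p x) ∧
    HasSum (fun p : ℕ => (∑' n : ℕ, (n : ℝ) * Q n (p + 1) x) * u ^ (p + 1))
      (u ^ 2 / (1 - u) ^ 2 * ((1 - u) / (1 - (1 - x) * u)) ^ (1 - 1 / u : ℝ)) := by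
  obtain ⟨hu0, hu1⟩ := hu
  set f : ℕ × ℕ → ℝ := fun q => (q.1 : ℝ) * Q q.1 q.2 x * u ^ q.2 with hf
  have hfnn : ∀ q, 0 ≤ f q := fun q =>
    mul_nonneg (mul_nonneg (Nat.cast_nonneg _) (Q_nonneg _ _ x hx)) (pow_nonneg hu0.le _)
  have hfin : ∀ n : ℕ, ∀ p ∉ Finset.range (n+2), f (n,p) = 0 := by
    intro n p hp
    rw [Finset.mem_range, not_lt] at hp
    simp [hf, Q_big n p x hp]
  have hfibsum : ∀ n : ℕ, HasSum (fun p => f (n,p)) ((n:ℝ) * Gg u n x) := by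
    intro n
    have h := hasSum_sum_of_ne_finset_zero (L := SummationFilter.unconditional ℕ) (hfin n)
    convert h using 1
    unfold Gg
    rw [Finset.mul_sum]
    exact Finset.sum_congr rfl fun p _ => by simp [hf]; ring
  have hGsum := Gg_hasSum u hu0 hu1 x hx
  have hsum2 : Summable f := by
    rw [summable_prod_of_nonneg hfnn]
    exact ⟨fun n => (hfibsum n).summable,
      hGsum.summable.congr fun n => ((hfibsum n).tsum_eq).symm⟩
  have htot : HasSum f (chiF u x) := by
    have h1 := hsum2.hasSum
    have h2 := h1.prod_fiberwise (fun n => (hfibsum n).summable.hasSum)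
    have h3 : ∑' q, f q = chiF u x := by
      refine HasSum.unique ?_ hGsum
      exact h1.prod_fiberwise (fun n => (hfibsum n))
    rwa [h3] at h1
  have hF2 : HasSum (fun q : ℕ × ℕ => f (q.2, q.1)) (chiF u x) :=
    (Equiv.prodComm ℕ ℕ).hasSum_iff.mpr htot
  have hP : ∀ p : ℕ, Summable fun n : ℕ => f (n,p) := by
    have := (summable_prod_of_nonneg (fun q => hfnn (q.2, q.1))).mp hF2.summable
    exact this.1
  constructor
  · intro p _
    have hup : (u:ℝ)^p ≠ 0 := pow_ne_zero _ (ne_of_gt hu0)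
    refine ((hP p).mul_right ((u^p)⁻¹)).congr fun n => ?_
    show ((n:ℝ) * Q n p x * u ^ p) * (u^p)⁻¹ = (n:ℝ) * Q n p x
    exact mul_inv_cancel_right₀ hup _
  · have H : HasSum (fun p => ∑' n : ℕ, f (n,p)) (chiF u x) :=
      hF2.prod_fiberwise (fun p => (hP p).hasSum)
    have h0 : (∑' n : ℕ, f (n, 0)) = 0 := by
      simp [hf, Q_p0]
    have Hshift : HasSum (fun p => ∑' n : ℕ, f (n, p+1)) (chiF u x) := by
      refine (hasSum_nat_add_iff (f := fun p => ∑' n : ℕ, f (n,p)) 1).mpr ?_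
      simpa [h0] using H
    have hterm : (fun p => ∑' n : ℕ, f (n, p+1))
        = fun p => (∑' n : ℕ, (n:ℝ) * Q n (p+1) x) * u^(p+1) := by
      funext p
      rw [← tsum_mul_right]
    rw [hterm] at Hshift
    have hchi : chiF u x = u ^ 2 / (1 - u) ^ 2 * ((1 - u) / (1 - (1 - x) * u)) ^ (1 - 1 / u : ℝ) := by
      unfold chiF
      rw [abs_of_nonneg hx.1, show 1 - u + u * x = 1 - (1-x)*u from by ring]
    rwa [hchi] at Hshift
end

section
/- For every integer p ≥ 2 and all x ∈ [0,1]: P_{p,1}(x) = ∫_0^x P_{p,p}(v) dv, and for every 2 ≤ k ≤ p, P_{p,k}(x) = (1−x)·P_{p−1,k−1}(x) + ∫_0^x P_{p,k−1}(v) dv, where P_{1,1}(x) = 1 for all x ∈ [0,1]. -/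
open MeasureTheory intervalIntegral

/-- `R n p k x` : probability that, in a dart game with `p` remaining players where the
probability of beating the best throw so far is `x`, the `k`-th player in throwing order
wins after exactly `n` further throws. -/
noncomputable def R : ℕ → ℕ → ℕ → ℝ → ℝ
  | 0, p, k, _ => if p = 1 ∧ k = 1 then 1 else 0
  | n + 1, p, k, x =>
      if p ≤ 1 then 0
      else if k = 1 then ∫ v in (0:ℝ)..x, R n p p v
      else (1 - x) * R n (p - 1) (k - 1) x + ∫ v in (0:ℝ)..x, R n p (k - 1) v

/-- `P p k x = ∑_{n≥0} R_{n,p,k}(x)` : the probability that, when `p` players remain and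
the probability of beating the best throw so far is `x`, the `k`-th player in throwing
order wins the game. -/
noncomputable def P (p k : ℕ) (x : ℝ) : ℝ := ∑' n : ℕ, R n p k x

lemma R_succ (n p k : ℕ) (x : ℝ) :
    R (n+1) p k x = if p ≤ 1 then 0
      else if k = 1 then ∫ v in (0:ℝ)..x, R n p p v
      else (1 - x) * R n (p - 1) (k - 1) x + ∫ v in (0:ℝ)..x, R n p (k - 1) v := rfl

lemma R_cont (n : ℕ) : ∀ p k : ℕ, Continuous (R n p k) := by
  induction n with
  | zero =>
    intro p k
    show Continuous fun _ : ℝ => if p = 1 ∧ k = 1 then (1:ℝ) else 0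
    exact continuous_const
  | succ n ih =>
    intro p k
    simp only [funext fun x => R_succ n p k x]
    split_ifs with h1 h2
    · exact continuous_const
    · exact intervalIntegral.continuous_primitive
        (fun a b => (ih p p).intervalIntegrable a b) 0
    · exact ((continuous_const.sub continuous_id).mul (ih (p-1) (k-1))).add
        (intervalIntegral.continuous_primitive
          (fun a b => (ih p (k-1)).intervalIntegrable a b) 0)

lemma fact_mono_bound {x : ℝ} (hx0 : 0 ≤ x) (hx1 : x ≤ 1) {a b : ℕ} (hab : a ≤ b) :
    x ^ b / (b.factorial : ℝ) ≤ x ^ a / (a.factorial : ℝ) :=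
  div_le_div₀ (pow_nonneg hx0 a) (pow_le_pow_of_le_one hx0 hx1 hab)
    (by exact_mod_cast a.factorial_pos) (by exact_mod_cast Nat.factorial_le hab)

lemma integral_pow_bound (n c : ℕ) (x : ℝ) :
    (∫ v in (0:ℝ)..x, 2^n * v^c / (c.factorial : ℝ))
      = 2^n * x^(c+1) / ((c+1).factorial : ℝ) := by
  have h : (fun v : ℝ => 2^n * v^c / (c.factorial : ℝ))
      = fun v : ℝ => (2^n / (c.factorial : ℝ)) * v^c := by
    funext v; ring
  rw [h, intervalIntegral.integral_const_mul, integral_pow,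
    zero_pow (Nat.succ_ne_zero c), sub_zero, Nat.factorial_succ]
  rw [div_mul_div_comm]
  push_cast
  ring

lemma R_bound (n : ℕ) : ∀ p k : ℕ, ∀ x ∈ Set.Icc (0:ℝ) 1,
    |R n p k x| ≤ 2^n * x^(n+1-p) / ((n+1-p).factorial : ℝ) := by
  induction n with
  | zero =>
    rintro p k x ⟨hx0, hx1⟩
    show |if p = 1 ∧ k = 1 then (1:ℝ) else 0| ≤ _
    split_ifs with h
    · obtain ⟨hp, -⟩ := h
      subst hp
      norm_num
    · simp only [abs_zero]
      positivity
  | succ n ih =>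
    rintro p k x hx
    obtain ⟨hx0, hx1⟩ := hx
    rw [R_succ]
    split_ifs with h1 h2
    · simp only [abs_zero]; positivity
    · -- k = 1 branch
      push_neg at h1
      have hIint : ∀ j, IntervalIntegrable (fun v => |R n p j v|) volume 0 x :=
        fun j => ((R_cont n p j).abs).intervalIntegrable 0 x
      have hBint : IntervalIntegrable
          (fun v => 2^n * v^(n+1-p) / (((n+1-p).factorial : ℝ))) volume 0 x := by
        apply Continuous.intervalIntegrable
        continuity
      calc |∫ v in (0:ℝ)..x, R n p p v|
          ≤ ∫ v in (0:ℝ)..x, |R n p p v| :=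
            intervalIntegral.abs_integral_le_integral_abs hx0
        _ ≤ ∫ v in (0:ℝ)..x, 2^n * v^(n+1-p) / (((n+1-p).factorial : ℝ)) := by
            apply intervalIntegral.integral_mono_on hx0 (hIint p) hBint
            intro v hv
            exact ih p p v ⟨hv.1, hv.2.trans hx1⟩
        _ = 2^n * x^(n+1-p+1) / (((n+1-p+1).factorial : ℝ)) := integral_pow_bound n _ x
        _ ≤ 2^n * x^(n+2-p) / (((n+2-p).factorial : ℝ)) := by
            have hle : n+2-p ≤ n+1-p+1 := by omega
            have := fact_mono_bound hx0 hx1 hle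
            have h2n : (0:ℝ) ≤ 2^n := by positivity
            calc 2^n * x^(n+1-p+1) / (((n+1-p+1).factorial : ℝ))
                = 2^n * (x^(n+1-p+1) / (((n+1-p+1).factorial : ℝ))) := by ring
              _ ≤ 2^n * (x^(n+2-p) / (((n+2-p).factorial : ℝ))) := by
                  exact mul_le_mul_of_nonneg_left this h2n
              _ = 2^n * x^(n+2-p) / (((n+2-p).factorial : ℝ)) := by ring
        _ ≤ 2^(n+1) * x^(n+2-p) / (((n+2-p).factorial : ℝ)) := by
            gcongr <;> first | exact pow_nonneg hx0 _ | norm_num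
    · -- k ≥ 2 branch
      push_neg at h1
      have hIint : IntervalIntegrable (fun v => |R n p (k-1) v|) volume 0 x :=
        ((R_cont n p (k-1)).abs).intervalIntegrable 0 x
      have hBint : IntervalIntegrable
          (fun v => 2^n * v^(n+1-p) / (((n+1-p).factorial : ℝ))) volume 0 x := by
        apply Continuous.intervalIntegrable
        continuity
      have hA : |(1-x) * R n (p-1) (k-1) x| ≤ 2^n * x^(n+2-p) / (((n+2-p).factorial : ℝ)) := by
        have h1x : |1 - x| ≤ 1 := by rw [abs_le]; constructor <;> linarith
        have hR := ih (p-1) (k-1) x ⟨hx0, hx1⟩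
        have hexp : n+1-(p-1) = n+2-p := by omega
        rw [hexp] at hR
        calc |(1-x) * R n (p-1) (k-1) x| = |1-x| * |R n (p-1) (k-1) x| := abs_mul _ _
          _ ≤ 1 * (2^n * x^(n+2-p) / (((n+2-p).factorial : ℝ))) :=
              mul_le_mul h1x hR (abs_nonneg _) zero_le_one
          _ = 2^n * x^(n+2-p) / (((n+2-p).factorial : ℝ)) := one_mul _
      have hB : |∫ v in (0:ℝ)..x, R n p (k-1) v|
          ≤ 2^n * x^(n+2-p) / (((n+2-p).factorial : ℝ)) := by
        calc |∫ v in (0:ℝ)..x, R n p (k-1) v|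
            ≤ ∫ v in (0:ℝ)..x, |R n p (k-1) v| :=
              intervalIntegral.abs_integral_le_integral_abs hx0
          _ ≤ ∫ v in (0:ℝ)..x, 2^n * v^(n+1-p) / (((n+1-p).factorial : ℝ)) := by
              apply intervalIntegral.integral_mono_on hx0 hIint hBint
              intro v hv
              exact ih p (k-1) v ⟨hv.1, hv.2.trans hx1⟩
          _ = 2^n * x^(n+1-p+1) / (((n+1-p+1).factorial : ℝ)) := integral_pow_bound n _ x
          _ ≤ 2^n * x^(n+2-p) / (((n+2-p).factorial : ℝ)) := by
              have hle : n+2-p ≤ n+1-p+1 := by omega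
              have := fact_mono_bound hx0 hx1 hle
              have h2n : (0:ℝ) ≤ 2^n := by positivity
              calc 2^n * x^(n+1-p+1) / (((n+1-p+1).factorial : ℝ))
                  = 2^n * (x^(n+1-p+1) / (((n+1-p+1).factorial : ℝ))) := by ring
                _ ≤ 2^n * (x^(n+2-p) / (((n+2-p).factorial : ℝ))) :=
                    mul_le_mul_of_nonneg_left this h2n
                _ = 2^n * x^(n+2-p) / (((n+2-p).factorial : ℝ)) := by ring
      calc |(1 - x) * R n (p-1) (k-1) x + ∫ v in (0:ℝ)..x, R n p (k-1) v|
          ≤ |(1 - x) * R n (p-1) (k-1) x| + |∫ v in (0:ℝ)..x, R n p (k-1) v| := abs_add_le _ _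
        _ ≤ 2^n * x^(n+2-p) / (((n+2-p).factorial : ℝ))
            + 2^n * x^(n+2-p) / (((n+2-p).factorial : ℝ)) := add_le_add hA hB
        _ = 2^(n+1) * x^(n+2-p) / (((n+2-p).factorial : ℝ)) := by ring

lemma summable_bound (p : ℕ) : Summable (fun n : ℕ => (2:ℝ)^n / ((n+1-p).factorial : ℝ)) := by
  rw [← summable_nat_add_iff p]
  refine Summable.of_nonneg_of_le (fun n => by positivity) (fun n => ?_)
    ((Real.summable_pow_div_factorial 2).mul_left ((2:ℝ)^p))
  have hexp : n + p + 1 - p = n + 1 := by omega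
  rw [hexp, pow_add, ← mul_div_assoc, mul_comm ((2:ℝ)^p) ((2:ℝ)^n)]
  gcongr <;> first | positivity | omega | exact_mod_cast Nat.factorial_le (Nat.le_succ n)

lemma R_abs_summable (p k : ℕ) {x : ℝ} (hx : x ∈ Set.Icc (0:ℝ) 1) :
    Summable fun n => |R n p k x| := by
  apply Summable.of_nonneg_of_le (fun n => abs_nonneg _) ?_ (summable_bound p)
  intro n
  calc |R n p k x| ≤ 2^n * x^(n+1-p) / ((n+1-p).factorial : ℝ) := R_bound n p k x hx
    _ ≤ 2^n * 1 / ((n+1-p).factorial : ℝ) := by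
        gcongr
        exact pow_le_one₀ hx.1 hx.2
    _ = 2^n / ((n+1-p).factorial : ℝ) := by ring

lemma R_summable (p k : ℕ) {x : ℝ} (hx : x ∈ Set.Icc (0:ℝ) 1) :
    Summable fun n => R n p k x :=
  (R_abs_summable p k hx).of_abs

lemma summable_int_norm (p k : ℕ) {x : ℝ} (hx : x ∈ Set.Icc (0:ℝ) 1) :
    Summable fun n => ∫ v in Set.Ioc (0:ℝ) x, ‖R n p k v‖ := by
  apply Summable.of_nonneg_of_le
    (fun n => integral_nonneg (fun v => norm_nonneg _)) ?_ (summable_bound p)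
  intro n
  have hint : IntegrableOn (fun v => ‖R n p k v‖) (Set.Ioc (0:ℝ) x) volume :=
    ((R_cont n p k).norm).integrableOn_Ioc
  calc (∫ v in Set.Ioc (0:ℝ) x, ‖R n p k v‖)
      ≤ ∫ _ in Set.Ioc (0:ℝ) x, (2:ℝ)^n / ((n+1-p).factorial : ℝ) := by
        apply setIntegral_mono_on hint (integrableOn_const (by
          rw [Real.volume_Ioc]; exact ENNReal.ofReal_ne_top)) measurableSet_Ioc
        intro v hv
        have hv' : v ∈ Set.Icc (0:ℝ) 1 := ⟨hv.1.le, hv.2.trans hx.2⟩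
        calc ‖R n p k v‖ = |R n p k v| := rfl
          _ ≤ 2^n * v^(n+1-p) / ((n+1-p).factorial : ℝ) := R_bound n p k v hv'
          _ ≤ 2^n * 1 / ((n+1-p).factorial : ℝ) := by
              gcongr
              exact pow_le_one₀ hv'.1 hv'.2
          _ = 2^n / ((n+1-p).factorial : ℝ) := by ring
    _ ≤ (2:ℝ)^n / ((n+1-p).factorial : ℝ) := by
        rw [setIntegral_const, measureReal_def, Real.volume_Ioc, smul_eq_mul]
        have h1 : (ENNReal.ofReal (x - 0)).toReal ≤ 1 := by
          rw [ENNReal.toReal_ofReal_eq_iff.2]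
          · linarith [hx.2]
          · linarith [hx.1]
        have h2 : (0:ℝ) ≤ (2:ℝ)^n / ((n+1-p).factorial : ℝ) := by positivity
        calc (ENNReal.ofReal (x - 0)).toReal * ((2:ℝ)^n / ((n+1-p).factorial : ℝ))
            ≤ 1 * ((2:ℝ)^n / ((n+1-p).factorial : ℝ)) :=
              mul_le_mul_of_nonneg_right h1 h2
          _ = (2:ℝ)^n / ((n+1-p).factorial : ℝ) := one_mul _

lemma swap_sum_integral (p k : ℕ) {x : ℝ} (hx : x ∈ Set.Icc (0:ℝ) 1) :
    (∑' n : ℕ, ∫ v in (0:ℝ)..x, R n p k v) = ∫ v in (0:ℝ)..x, P p k v := by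
  have h0x := hx.1
  simp only [intervalIntegral.integral_of_le h0x]
  have key : (∑' n : ℕ, ∫ v in Set.Ioc (0:ℝ) x, R n p k v)
      = ∫ v in Set.Ioc (0:ℝ) x, ∑' n : ℕ, R n p k v :=
    MeasureTheory.integral_tsum_of_summable_integral_norm
      (fun n => (R_cont n p k).integrableOn_Ioc)
      (summable_int_norm p k hx)
  rw [key]
  rfl

lemma summable_int (p k : ℕ) {x : ℝ} (hx : x ∈ Set.Icc (0:ℝ) 1) :
    Summable fun n => ∫ v in (0:ℝ)..x, R n p k v := by
  apply Summable.of_norm_bounded (summable_int_norm p k hx)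
  intro n
  rw [intervalIntegral.integral_of_le hx.1]
  exact norm_integral_le_integral_norm _

/-- For `p ≥ 2` and `x ∈ [0,1]`: `P_{p,1}(x) = ∫_0^x P_{p,p}(v) dv` and, for
`2 ≤ k ≤ p`, `P_{p,k}(x) = (1−x)·P_{p−1,k−1}(x) + ∫_0^x P_{p,k−1}(v) dv`. -/
theorem P_recurrence (p : ℕ) (hp : 2 ≤ p) (x : ℝ) (hx : x ∈ Set.Icc (0:ℝ) 1) :
    P p 1 x = ∫ v in (0:ℝ)..x, P p p v ∧
    ∀ k : ℕ, 2 ≤ k → k ≤ p →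
      P p k x = (1 - x) * P (p - 1) (k - 1) x + ∫ v in (0:ℝ)..x, P p (k - 1) v := by
  have hple : ¬ p ≤ 1 := by omega
  constructor
  · have h0 : R 0 p 1 x = 0 := by
      show (if p = 1 ∧ 1 = 1 then (1:ℝ) else 0) = 0
      rw [if_neg]; rintro ⟨h, -⟩; omega
    have h1 : ∀ n, R (n+1) p 1 x = ∫ v in (0:ℝ)..x, R n p p v := by
      intro n
      rw [R_succ, if_neg hple, if_pos rfl]
    rw [P, Summable.tsum_eq_zero_add (R_summable p 1 hx), h0, zero_add]
    simp only [h1]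
    exact swap_sum_integral p p hx
  · intro k hk2 hkp
    have hk1 : k ≠ 1 := by omega
    have h0 : R 0 p k x = 0 := by
      show (if p = 1 ∧ k = 1 then (1:ℝ) else 0) = 0
      rw [if_neg]; rintro ⟨h, -⟩; omega
    have h1 : ∀ n, R (n+1) p k x
        = (1 - x) * R n (p-1) (k-1) x + ∫ v in (0:ℝ)..x, R n p (k-1) v := by
      intro n
      rw [R_succ, if_neg hple, if_neg hk1]
    rw [P, Summable.tsum_eq_zero_add (R_summable p k hx), h0, zero_add]
    simp only [h1]
    rw [Summable.tsum_add ((R_summable (p-1) (k-1) hx).mul_left (1-x)) (summable_int p (k-1) hx)]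
    rw [tsum_mul_left, swap_sum_integral p (k-1) hx]
    rfl
end
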